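/- For every β ∈ (0,1], there is a unique point ζ ∈ [0, β/2] at which the function δ ↦ g_k(β,δ) attains its maximum over [0, β/2]; moreover ζ lies in the open interval (0, β/2), the derivative of δ ↦ g_k(β,δ) vanishes at ζ and vanishes at no other point of (0, β/2), and g_k(β,ζ) = G_k(β). -/

import Mathlib

/-- The binary entropy function `H(t) = -t·log₂ t - (1-t)·log₂(1-t)`. -/
noncomputable def binEntropy (t : ℝ) : ℝ :=
  -(t * Real.logb 2 t) - (1 - t) * Real.logb 2 (1 - t)

/-- The exponent function `g_k(β,δ)`. -/
noncomputable def gExp (k : ℕ) (β δ : ℝ) : ℝ :=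
  (β - 2 * δ) * Real.logb 2 ((k : ℝ) - 1) - (1 - δ) * Real.logb 2 (k : ℝ) +
    2 * binEntropy δ + (1 - δ) * binEntropy ((β - 2 * δ) / (1 - δ))

/-- `G_k(β) = sup { g_k(β,δ) : 0 ≤ δ ≤ β/2 }`. -/
noncomputable def GExp (k : ℕ) (β : ℝ) : ℝ :=
  sSup (gExp k β '' Set.Icc 0 (β / 2))

/-! ### Auxiliary definitions and lemmas -/

/-- A `negMulLog`-based rewriting of `gExp` that is smooth away from the
degenerate points. -/
noncomputable def Fg (k : ℕ) (β x : ℝ) : ℝ :=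
  ((β - 2 * x) * Real.log ((k : ℝ) - 1) - (1 - x) * Real.log k +
      2 * Real.negMulLog x + Real.negMulLog (1 - x) + Real.negMulLog (β - 2 * x) +
      Real.negMulLog (1 + x - β)) / Real.log 2

/-- The derivative of `Fg` (hence of `gExp`) in the interior. -/
noncomputable def Dg (k : ℕ) (β x : ℝ) : ℝ :=
  (Real.log k + Real.log (1 - x) + 2 * Real.log (β - 2 * x) -
      2 * Real.log ((k : ℝ) - 1) - 2 * Real.log x - Real.log (1 + x - β)) / Real.log 2

lemma binEntropy_eq (t : ℝ) :
    binEntropy t = (Real.negMulLog t + Real.negMulLog (1 - t)) / Real.log 2 := by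
  simp only [binEntropy, Real.negMulLog, Real.logb]
  ring

lemma mul_negMulLog_div (a : ℝ) {c : ℝ} (hc : c ≠ 0) :
    c * Real.negMulLog (a / c) = Real.negMulLog a + a * Real.log c := by
  rcases eq_or_ne a 0 with rfl | ha
  · simp [Real.negMulLog]
  · simp only [Real.negMulLog]
    rw [Real.log_div ha hc]
    field_simp
    ring

lemma mul_binEntropy_div (a : ℝ) {c : ℝ} (hc : c ≠ 0) :
    c * binEntropy (a / c) =
      (Real.negMulLog a + Real.negMulLog (c - a) - Real.negMulLog c) / Real.log 2 := by
  have e1 : 1 - a / c = (c - a) / c := by field_simp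
  rw [binEntropy_eq, e1]
  have e2 := mul_negMulLog_div a hc
  have e3 := mul_negMulLog_div (c - a) hc
  calc c * ((Real.negMulLog (a / c) + Real.negMulLog ((c - a) / c)) / Real.log 2)
      = (c * Real.negMulLog (a / c) + c * Real.negMulLog ((c - a) / c)) / Real.log 2 := by
        ring
    _ = ((Real.negMulLog a + a * Real.log c) +
          (Real.negMulLog (c - a) + (c - a) * Real.log c)) / Real.log 2 := by rw [e2, e3]
    _ = (Real.negMulLog a + Real.negMulLog (c - a) - Real.negMulLog c) / Real.log 2 := by
        simp only [Real.negMulLog]; ring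

lemma gExp_eq (k : ℕ) (β δ : ℝ) (hδ : δ ≠ 1) : gExp k β δ = Fg k β δ := by
  have h1 : (1 : ℝ) - δ ≠ 0 := sub_ne_zero.mpr (Ne.symm hδ)
  have e2 : (1 : ℝ) - δ - (β - 2 * δ) = 1 + δ - β := by ring
  rw [gExp, binEntropy_eq, mul_binEntropy_div _ h1, e2, Fg]
  simp only [Real.logb]
  ring

lemma hasDerivAt_Fg (k : ℕ) (β x : ℝ) (hx0 : x ≠ 0) (hx1 : (1 : ℝ) - x ≠ 0)
    (hx2 : β - 2 * x ≠ 0) (hx3 : 1 + x - β ≠ 0) :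
    HasDerivAt (Fg k β) (Dg k β x) x := by
  have h1 : HasDerivAt (fun x : ℝ => β - 2 * x) (-2) x := by
    simpa using ((hasDerivAt_id x).const_mul (2 : ℝ)).const_sub β
  have h2 : HasDerivAt (fun x : ℝ => 1 - x) (-1) x := by
    simpa using (hasDerivAt_id x).const_sub (1 : ℝ)
  have h3 : HasDerivAt (fun x : ℝ => 1 + x - β) 1 x := by
    simpa using ((hasDerivAt_id x).const_add (1 : ℝ)).sub_const β
  have hl1 : HasDerivAt (fun x : ℝ => (β - 2 * x) * Real.log ((k : ℝ) - 1))
      (-2 * Real.log ((k : ℝ) - 1)) x := h1.mul_const _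
  have hl2 : HasDerivAt (fun x : ℝ => (1 - x) * Real.log k)
      (-1 * Real.log k) x := h2.mul_const _
  have hn0 : HasDerivAt (fun x : ℝ => 2 * Real.negMulLog x)
      (2 * (-Real.log x - 1)) x := (Real.hasDerivAt_negMulLog hx0).const_mul 2
  have hn1 : HasDerivAt (fun x : ℝ => Real.negMulLog (1 - x))
      ((-Real.log (1 - x) - 1) * (-1)) x :=
    (Real.hasDerivAt_negMulLog hx1).comp x h2
  have hn2 : HasDerivAt (fun x : ℝ => Real.negMulLog (β - 2 * x))
      ((-Real.log (β - 2 * x) - 1) * (-2)) x :=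
    by have := (Real.hasDerivAt_negMulLog hx2).comp x h1; exact this
  have hn3 : HasDerivAt (fun x : ℝ => Real.negMulLog (1 + x - β))
      ((-Real.log (1 + x - β) - 1) * 1) x :=
    by have := (Real.hasDerivAt_negMulLog hx3).comp x h3; exact this
  have htot := ((((hl1.sub hl2).add hn0).add hn1).add hn2).add hn3
  have h := htot.div_const (Real.log 2)
  have he : Dg k β x =
      (-2 * Real.log ((k : ℝ) - 1) - -1 * Real.log k + 2 * (-Real.log x - 1) +
        (-Real.log (1 - x) - 1) * (-1) + (-Real.log (β - 2 * x) - 1) * (-2) +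
        (-Real.log (1 + x - β) - 1) * 1) / Real.log 2 := by
    rw [Dg]; ring
  rw [he]
  exact h

lemma continuous_Fg (k : ℕ) (β : ℝ) : Continuous (Fg k β) := by
  unfold Fg
  fun_prop

lemma strictAntiOn_Dg (k : ℕ) (β : ℝ) (hβ1 : β ≤ 1) :
    StrictAntiOn (Dg k β) (Set.Ioo 0 (β / 2)) := by
  intro x hx y hy hxy
  obtain ⟨hx0, hxb⟩ := hx
  obtain ⟨hy0, hyb⟩ := hy
  have hL2 : (0 : ℝ) < Real.log 2 := Real.log_pos one_lt_two
  have i1 : Real.log (1 - y) < Real.log (1 - x) :=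
    Real.log_lt_log (by linarith) (by linarith)
  have i2 : Real.log (β - 2 * y) < Real.log (β - 2 * x) :=
    Real.log_lt_log (by linarith) (by linarith)
  have i3 : Real.log x < Real.log y := Real.log_lt_log hx0 hxy
  have i4 : Real.log (1 + x - β) < Real.log (1 + y - β) :=
    Real.log_lt_log (by linarith) (by linarith)
  rw [Dg, Dg]
  exact (div_lt_div_iff_of_pos_right hL2).mpr (by linarith)

/-- For `β ∈ (0,1]`, the map `δ ↦ g_k(β,δ)` has a unique maximizer `ζ` over
`[0,β/2]`; `ζ` lies in `(0,β/2)`, it is the unique interior zero of the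
derivative, and `g_k(β,ζ) = G_k(β)`. -/
theorem gExp_unique_maximizer (k : ℕ) (hk : 2 ≤ k)
    (β : ℝ) (hβ0 : 0 < β) (hβ1 : β ≤ 1) :
    ∃ ζ : ℝ, ζ ∈ Set.Ioo 0 (β / 2) ∧
      IsMaxOn (gExp k β) (Set.Icc 0 (β / 2)) ζ ∧
      (∀ ζ' ∈ Set.Icc (0 : ℝ) (β / 2),
        IsMaxOn (gExp k β) (Set.Icc 0 (β / 2)) ζ' → ζ' = ζ) ∧
      deriv (gExp k β) ζ = 0 ∧
      (∀ δ ∈ Set.Ioo (0 : ℝ) (β / 2), deriv (gExp k β) δ = 0 → δ = ζ) ∧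
      gExp k β ζ = GExp k β := by
  have hk2 : (2 : ℝ) ≤ (k : ℝ) := by exact_mod_cast hk
  have hk1 : (0 : ℝ) < (k : ℝ) - 1 := by linarith
  have hkpos : (0 : ℝ) < (k : ℝ) := by linarith
  -- the derivative formula on the interior
  have hderiv : ∀ x ∈ Set.Ioo (0 : ℝ) (β / 2), deriv (gExp k β) x = Dg k β x := by
    intro x hx
    obtain ⟨hx0, hxb⟩ := hx
    have hx1 : x < 1 := by linarith
    have hev : gExp k β =ᶠ[nhds x] Fg k β := by
      filter_upwards [Iio_mem_nhds hx1] with y hy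
      exact gExp_eq k β y (ne_of_lt hy)
    rw [hev.deriv_eq]
    exact (hasDerivAt_Fg k β x (ne_of_gt hx0) (by linarith) (by linarith)
      (by linarith)).deriv
  -- continuity of gExp on the closed interval
  have hcont : ContinuousOn (gExp k β) (Set.Icc 0 (β / 2)) := by
    refine ((continuous_Fg k β).continuousOn).congr ?_
    intro δ hδ
    exact gExp_eq k β δ (by rcases hδ with ⟨_, h⟩; intro he; rw [he] at h; linarith)
  -- existence of the critical point via the intermediate value theorem
  set φ : ℝ → ℝ := fun x =>
    (k : ℝ) * (1 - x) * (β - 2 * x) ^ 2 - ((k : ℝ) - 1) ^ 2 * x ^ 2 * (1 + x - β)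
    with hφdef
  have hφc : ContinuousOn φ (Set.Icc 0 (β / 2)) := by fun_prop
  have hφ0 : 0 < φ 0 := by
    simp only [hφdef]
    nlinarith
  have hφb : φ (β / 2) < 0 := by
    have h5 : (0 : ℝ) < ((k : ℝ) - 1) ^ 2 * (β / 2) ^ 2 * (1 + β / 2 - β) :=
      mul_pos (mul_pos (by positivity) (by positivity)) (by linarith)
    simp only [hφdef]
    nlinarith [h5]
  obtain ⟨ζ, hζmem, hφζ⟩ :=
    intermediate_value_Ioo' (by linarith : (0 : ℝ) ≤ β / 2) hφc ⟨hφb, hφ0⟩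
  obtain ⟨hζ0, hζb⟩ := hζmem
  have p1 : (0 : ℝ) < 1 - ζ := by linarith
  have p2 : (0 : ℝ) < β - 2 * ζ := by linarith
  have p3 : (0 : ℝ) < 1 + ζ - β := by linarith
  -- the derivative vanishes at ζ
  have hDζ : Dg k β ζ = 0 := by
    have key : (k : ℝ) * ((1 - ζ) * (β - 2 * ζ) ^ 2) =
        ((k : ℝ) - 1) ^ 2 * (ζ ^ 2 * (1 + ζ - β)) := by
      have := hφζ
      simp only [hφdef] at this
      nlinarith [this]
    have hlog := congrArg Real.log key
    rw [Real.log_mul (ne_of_gt hkpos) (by positivity),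
      Real.log_mul (ne_of_gt p1) (by positivity),
      Real.log_mul (by positivity) (by positivity),
      Real.log_mul (by positivity) (ne_of_gt p3),
      Real.log_pow, Real.log_pow, Real.log_pow] at hlog
    rw [Dg, div_eq_zero_iff]
    left
    push_cast at hlog ⊢
    linarith
  have hDanti := strictAntiOn_Dg k β hβ1
  have hζIoo : ζ ∈ Set.Ioo (0 : ℝ) (β / 2) := ⟨hζ0, hζb⟩
  have hζIcc : ζ ∈ Set.Icc (0 : ℝ) (β / 2) := ⟨le_of_lt hζ0, le_of_lt hζb⟩
  -- strict monotonicity on [0, ζ]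
  have hmono : StrictMonoOn (gExp k β) (Set.Icc 0 ζ) := by
    refine strictMonoOn_of_deriv_pos (convex_Icc _ _)
      (hcont.mono (Set.Icc_subset_Icc le_rfl (le_of_lt hζb))) ?_
    intro x hx
    rw [interior_Icc] at hx
    obtain ⟨hx0, hxζ⟩ := hx
    have hxI : x ∈ Set.Ioo (0 : ℝ) (β / 2) := ⟨hx0, lt_trans hxζ hζb⟩
    rw [hderiv x hxI]
    have := hDanti hxI hζIoo hxζ
    rw [hDζ] at this
    exact this
  -- strict antitonicity on [ζ, β/2]
  have hanti : StrictAntiOn (gExp k β) (Set.Icc ζ (β / 2)) := by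
    refine strictAntiOn_of_deriv_neg (convex_Icc _ _)
      (hcont.mono (Set.Icc_subset_Icc (le_of_lt hζ0) le_rfl)) ?_
    intro x hx
    rw [interior_Icc] at hx
    obtain ⟨hxζ, hxb⟩ := hx
    have hxI : x ∈ Set.Ioo (0 : ℝ) (β / 2) := ⟨lt_trans hζ0 hxζ, hxb⟩
    rw [hderiv x hxI]
    have := hDanti hζIoo hxI hxζ
    rw [hDζ] at this
    exact this
  -- ζ is a maximizer
  have hmax : IsMaxOn (gExp k β) (Set.Icc 0 (β / 2)) ζ := by
    intro y hy
    obtain ⟨hy0, hyb⟩ := hy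
    simp only [Set.mem_setOf_eq]
    rcases le_or_gt y ζ with h | h
    · exact hmono.monotoneOn ⟨hy0, h⟩ ⟨le_of_lt hζ0, le_rfl⟩ h
    · exact le_of_lt (hanti ⟨le_rfl, le_of_lt hζb⟩ ⟨le_of_lt h, hyb⟩ h)
  refine ⟨ζ, hζIoo, hmax, ?_, ?_, ?_, ?_⟩
  · -- uniqueness of the maximizer
    intro ζ' hζ' hmax'
    by_contra hne
    rcases lt_or_gt_of_ne hne with h | h
    · have h1 : gExp k β ζ' < gExp k β ζ :=
        hmono ⟨hζ'.1, le_of_lt h⟩ ⟨le_of_lt hζ0, le_rfl⟩ h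
      have h2 : gExp k β ζ ≤ gExp k β ζ' := hmax' hζIcc
      linarith
    · have h1 : gExp k β ζ' < gExp k β ζ :=
        hanti ⟨le_rfl, le_of_lt hζb⟩ ⟨le_of_lt h, hζ'.2⟩ h
      have h2 : gExp k β ζ ≤ gExp k β ζ' := hmax' hζIcc
      linarith
  · rw [hderiv ζ hζIoo]; exact hDζ
  · -- uniqueness of the critical point
    intro δ hδ hd
    rw [hderiv δ hδ] at hd
    exact hDanti.injOn hδ hζIoo (by rw [hd, hDζ])
  · -- equality with the supremum
    have hgr : IsGreatest (gExp k β '' Set.Icc 0 (β / 2)) (gExp k β ζ) := by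
      constructor
      · exact ⟨ζ, hζIcc, rfl⟩
      · rintro y ⟨x, hx, rfl⟩
        exact hmax hx
    rw [GExp]
    exact hgr.csSup_eq.symm
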